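/- For N ≥ 1 and β ∈ (0,1), define η(n) = t*(N - n, β) for n ∈ {0,1,…,N}, where t*(k,β) is the unique solution of (1-β)/N = ∑_{i=0}^{k} C(N,i)(1-t)^i t^{N-i} for 1 ≤ k ≤ N-1, t*(0,β) = (1-β)^{1/N}, and t*(N,β) = 0. Then η is monotone nondecreasing in n, η(0) = 0, and η(N) = (1-β)^{1/N}; in particular 0 ≤ η(n) ≤ (1-β)^{1/N} for all n. -/

import Mathlib

open Finset Set

/-- The cumulative distribution function of a Binomial(N, 1-t) random variable at k. -/
noncomputable def binCDF (N k : ℕ) (t : ℝ) : ℝ :=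
  ∑ i ∈ Finset.range (k + 1), (N.choose i : ℝ) * (1 - t) ^ i * t ^ (N - i)

lemma hasDerivAt_binCDF (N k : ℕ) (hk : k < N) (x : ℝ) :
    HasDerivAt (binCDF N k)
      ((N.choose (k+1) : ℝ) * (k+1) * (1-x)^k * x^(N-(k+1))) x := by
  set g : ℕ → ℝ := fun j => (N.choose j : ℝ) * j * (1-x)^(j-1) * x^(N-j) with hg
  have hterm : ∀ i ∈ Finset.range (k+1),
      HasDerivAt (fun t : ℝ => (N.choose i : ℝ) * (1 - t) ^ i * t ^ (N - i))
        (g (i+1) - g i) x := by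
    intro i hi
    have hiN : i < N := lt_of_lt_of_le (Finset.mem_range.mp hi) hk
    have h1 : HasDerivAt (fun t : ℝ => (1 - t) ^ i)
        ((i : ℝ) * (1 - x) ^ (i - 1) * (-1)) x :=
      ((hasDerivAt_id x).const_sub 1).pow i
    have h2 := hasDerivAt_pow (N - i) x
    have h := (h1.mul h2).const_mul (N.choose i : ℝ)
    have h' : HasDerivAt (fun t : ℝ => (N.choose i : ℝ) * (1 - t) ^ i * t ^ (N - i))
        ((N.choose i : ℝ) * ((i : ℝ) * (1 - x) ^ (i - 1) * (-1) * x ^ (N - i)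
          + (1 - x) ^ i * (((N - i : ℕ) : ℝ) * x ^ (N - i - 1)))) x := by
      simpa [mul_assoc] using h
    convert h' using 1
    simp only [hg]
    have key : ((N.choose (i+1) : ℝ)) * (((i+1 : ℕ)) : ℝ)
        = (N.choose i : ℝ) * ((N - i : ℕ) : ℝ) := by
      exact_mod_cast Nat.choose_succ_right_eq N i
    have e2 : N - (i+1) = N - i - 1 := by omega
    rw [show (i+1) - 1 = i from rfl, e2, key]
    ring
  have hsum := HasDerivAt.fun_sum hterm
  have htel : ∑ i ∈ Finset.range (k+1), (g (i+1) - g i) = g (k+1) - g 0 :=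
    Finset.sum_range_sub g (k+1)
  have hg0 : g 0 = 0 := by simp [hg]
  have hgk : g (k+1) = (N.choose (k+1) : ℝ) * (k+1) * (1-x)^k * x^(N-(k+1)) := by
    simp only [hg, Nat.add_sub_cancel]
    push_cast
    ring
  rw [htel, hg0, sub_zero, hgk] at hsum
  exact hsum

lemma binCDF_strictMonoOn (N k : ℕ) (hk : k < N) :
    StrictMonoOn (binCDF N k) (Set.Icc (0:ℝ) 1) := by
  have hderiv : ∀ x : ℝ, HasDerivAt (binCDF N k)
      ((N.choose (k+1) : ℝ) * (k+1) * (1-x)^k * x^(N-(k+1))) x :=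
    fun x => hasDerivAt_binCDF N k hk x
  apply strictMonoOn_of_deriv_pos (convex_Icc 0 1)
  · exact (Differentiable.continuous fun x => (hderiv x).differentiableAt).continuousOn
  · intro x hx
    rw [interior_Icc, Set.mem_Ioo] at hx
    rw [(hderiv x).deriv]
    have h1 : (0:ℝ) < (N.choose (k+1) : ℝ) := by
      exact_mod_cast Nat.choose_pos (by omega : k+1 ≤ N)
    have h2 : (0:ℝ) < 1 - x := by linarith [hx.2]
    have h3 : (0:ℝ) < x := hx.1
    positivity

lemma binCDF_le_succ (N k : ℕ) {s : ℝ} (hs : s ∈ Set.Icc (0:ℝ) 1) :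
    binCDF N k s ≤ binCDF N (k+1) s := by
  obtain ⟨h0, h1⟩ := hs
  unfold binCDF
  rw [Finset.sum_range_succ ((fun i => (N.choose i : ℝ) * (1 - s) ^ i * s ^ (N - i))) (k+1)]
  have : (0:ℝ) ≤ (N.choose (k+1) : ℝ) * (1 - s) ^ (k+1) * s ^ (N - (k+1)) := by
    have : (0:ℝ) ≤ 1 - s := by linarith
    positivity
  linarith

theorem stmt_19 (N : ℕ) (hN : 1 ≤ N) (β : ℝ) (hβ : β ∈ Set.Ioo (0 : ℝ) 1)
    (t η : ℕ → ℝ)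
    (ht0 : t 0 = (1 - β) ^ ((1 : ℝ) / N)) (htN : t N = 0)
    (ht : ∀ k, 1 ≤ k → k ≤ N - 1 →
      t k ∈ Set.Ioo (0 : ℝ) 1 ∧ (1 - β) / N = binCDF N k (t k))
    (hη : ∀ n ≤ N, η n = t (N - n)) :
    (∀ n m, n ≤ m → m ≤ N → η n ≤ η m) ∧
    η 0 = 0 ∧ η N = (1 - β) ^ ((1 : ℝ) / N) ∧
    ∀ n ≤ N, 0 ≤ η n ∧ η n ≤ (1 - β) ^ ((1 : ℝ) / N) := by
  obtain ⟨hβ0, hβ1⟩ := hβ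
  have hb1 : (0:ℝ) < 1 - β := by linarith
  have hNR : (1:ℝ) ≤ (N:ℝ) := by exact_mod_cast hN
  have hNR0 : (0:ℝ) < (N:ℝ) := by linarith
  have ht0mem : t 0 ∈ Set.Icc (0:ℝ) 1 := by
    rw [ht0]
    constructor
    · exact Real.rpow_nonneg hb1.le _
    · exact Real.rpow_le_one hb1.le (by linarith) (by positivity)
  have hbin0 : ∀ s : ℝ, binCDF N 0 s = s ^ N := by
    intro s; simp [binCDF]
  have hval0 : binCDF N 0 (t 0) = 1 - β := by
    rw [hbin0, ht0, ← Real.rpow_natCast ((1-β) ^ ((1:ℝ)/N)) N, ← Real.rpow_mul hb1.le]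
    rw [one_div, inv_mul_cancel₀ (by positivity : (N:ℝ) ≠ 0), Real.rpow_one]
  have hdivle : (1 - β) / N ≤ 1 - β := div_le_self hb1.le hNR
  -- step lemma
  have hstep : ∀ k, k < N → t (k+1) ≤ t k := by
    intro k hk
    rcases eq_or_lt_of_le (Nat.succ_le_of_lt hk) with hkN | hkN
    · -- k+1 = N
      rw [(by omega : k + 1 = N), htN]
      rcases Nat.eq_zero_or_pos k with hk0 | hk0
      · rw [hk0]; exact ht0mem.1
      · exact ((ht k hk0 (by omega)).1.1).le
    · -- k+1 < N
      have h1 := ht (k+1) (by omega) (by omega)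
      have hmem1 : t (k+1) ∈ Set.Icc (0:ℝ) 1 := ⟨h1.1.1.le, h1.1.2.le⟩
      have hmemk : t k ∈ Set.Icc (0:ℝ) 1 := by
        rcases Nat.eq_zero_or_pos k with hk0 | hk0
        · rw [hk0]; exact ht0mem
        · exact ⟨(ht k hk0 (by omega)).1.1.le, (ht k hk0 (by omega)).1.2.le⟩
      have hvalk : (1 - β) / N ≤ binCDF N k (t k) := by
        rcases Nat.eq_zero_or_pos k with hk0 | hk0
        · rw [hk0, hval0]; exact hdivle
        · rw [← (ht k hk0 (by omega)).2]
      have hle : binCDF N k (t (k+1)) ≤ binCDF N k (t k) := by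
        calc binCDF N k (t (k+1)) ≤ binCDF N (k+1) (t (k+1)) := binCDF_le_succ N k hmem1
          _ = (1 - β) / N := (h1.2).symm
          _ ≤ binCDF N k (t k) := hvalk
      exact ((binCDF_strictMonoOn N k hk).le_iff_le hmem1 hmemk).mp hle
  have key : ∀ d a, a + d ≤ N → t (a + d) ≤ t a := by
    intro d
    induction d with
    | zero => intro a _; simp
    | succ d ih =>
      intro a h
      have h2 : a + d < N := by omega
      calc t (a + (d+1)) = t ((a+d)+1) := by ring_nf
        _ ≤ t (a+d) := hstep (a+d) h2
        _ ≤ t a := ih a (by omega)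
  have hanti : ∀ a b, a ≤ b → b ≤ N → t b ≤ t a := by
    intro a b hab hbN
    have := key (b - a) a (by omega)
    rwa [Nat.add_sub_cancel' hab] at this
  have hmono : ∀ n m, n ≤ m → m ≤ N → η n ≤ η m := by
    intro n m hnm hmN
    rw [hη n (hnm.trans hmN), hη m hmN]
    exact hanti (N - m) (N - n) (by omega) (by omega)
  have hη0 : η 0 = 0 := by rw [hη 0 (by omega)]; simpa using htN
  have hηN : η N = (1 - β) ^ ((1:ℝ)/N) := by
    rw [hη N le_rfl, Nat.sub_self]; exact ht0
  refine ⟨hmono, hη0, hηN, fun n hn => ?_⟩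
  constructor
  · have := hmono 0 n (Nat.zero_le n) hn
    rwa [hη0] at this
  · have := hmono n N hn le_rfl
    rwa [hηN] at this
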